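/- (Mixed paraparticle realization of an arbitrary Lie algebra.) Let L be a Lie algebra over ℂ (of finite or infinite dimension), let ρ : L → Matrix (Fin m) (Fin m) ℂ and σ : L → Matrix (Fin n) (Fin n) ℂ be Lie algebra homomorphisms into the respective matrix algebras with the commutator bracket, and let A be an associative unital ℂ-algebra containing parabosons B_k^± (k ∈ Fin m) and parafermions F_α^± (α ∈ Fin n) satisfying the relative parabose (Greenberg–Messiah) mixed relations. Then the ℂ-linear map J : L → A defined by J(X) := (1/2)·Σ_{k,l} ρ(X)_{kl}·{B_k^+, B_l^−} + (1/2)·Σ_{α,β} σ(X)_{αβ}·[F_α^+, F_β^−] satisfies J(⁅X, Y⁆) = J(X)·J(Y) − J(Y)·J(X) for all X, Y ∈ L; consequently J extends uniquely to a ℂ-algebra homomorphism from the universal enveloping algebra U(L) to A. -/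

import Mathlib

open scoped BigOperators

attribute [local instance 100] LieRing.ofAssociativeRing

noncomputable section

/-- The ringComm `[x, y] = x * y - y * x`. -/
def ringComm {A : Type*} [Ring A] (x y : A) : A := x * y - y * x

/-- The ringAnticomm `{x, y} = x * y + y * x`. -/
def ringAnticomm {A : Type*} [Ring A] (x y : A) : A := x * y + y * x

/-- A family of parabosons: `B k 1 = B_k^+`, `B k (-1) = B_k^-`, satisfying the
paraboson trilinear relations. -/
def IsParabosonFamily {A : Type*} [Ring A] [Algebra ℂ A] {ι : Type*} [DecidableEq ι]
    (B : ι → ℂ → A) : Prop :=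
  ∀ (i j k : ι), ∀ ξ ∈ ({1, -1} : Set ℂ), ∀ η ∈ ({1, -1} : Set ℂ),
    ∀ ε ∈ ({1, -1} : Set ℂ),
      ringComm (ringAnticomm (B i ξ) (B j η)) (B k ε) =
        ((ε - η) * (if j = k then (1 : ℂ) else 0)) • B i ξ +
          ((ε - ξ) * (if i = k then (1 : ℂ) else 0)) • B j η

/-- A family of parafermions: `F α 1 = F_α^+`, `F α (-1) = F_α^-`, satisfying the
parafermion trilinear relations. -/
def IsParafermionFamily {A : Type*} [Ring A] [Algebra ℂ A] {κ : Type*} [DecidableEq κ]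
    (F : κ → ℂ → A) : Prop :=
  ∀ (i j k : κ), ∀ ξ ∈ ({1, -1} : Set ℂ), ∀ η ∈ ({1, -1} : Set ℂ),
    ∀ ε ∈ ({1, -1} : Set ℂ),
      ringComm (ringComm (F i ξ) (F j η)) (F k ε) =
        ((1 / 2 : ℂ) * (ε - η) ^ 2 * (if j = k then (1 : ℂ) else 0)) • F i ξ -
          ((1 / 2 : ℂ) * (ε - ξ) ^ 2 * (if i = k then (1 : ℂ) else 0)) • F j η

/-- The relative parabose (Greenberg–Messiah) mixed trilinear relations between
a family of parabosons `B` and a family of parafermions `F`. -/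
def RelParaboseMixed {A : Type*} [Ring A] [Algebra ℂ A] {ι κ : Type*} [DecidableEq ι] [DecidableEq κ]
    (B : ι → ℂ → A) (F : κ → ℂ → A) : Prop :=
  ∀ (i j : ι) (α β : κ), ∀ ξ ∈ ({1, -1} : Set ℂ), ∀ η ∈ ({1, -1} : Set ℂ),
    ∀ ε ∈ ({1, -1} : Set ℂ),
      ringComm (ringAnticomm (B i ξ) (B j η)) (F α ε) = 0 ∧
      ringComm (ringComm (F α ξ) (F β η)) (B i ε) = 0 ∧
      ringComm (ringAnticomm (B i ξ) (F α η)) (B j ε) =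
        ((ε - ξ) * (if i = j then (1 : ℂ) else 0)) • F α η ∧
      ringAnticomm (ringAnticomm (B i ξ) (F α η)) (F β ε) =
        ((1 / 2 : ℂ) * (ε - η) ^ 2 * (if α = β then (1 : ℂ) else 0)) • B i ξ

section Aux

set_option linter.unusedSectionVars false
variable {A : Type*} [Ring A] [Algebra ℂ A]

lemma ringComm_eq_lie (x y : A) : ringComm x y = ⁅x, y⁆ := rfl

lemma mem1 : (1 : ℂ) ∈ ({1, -1} : Set ℂ) := Or.inl rfl
lemma memm1 : (-1 : ℂ) ∈ ({1, -1} : Set ℂ) := Or.inr rfl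

lemma sum_lie' {ι : Type*} (s : Finset ι) (f : ι → A) (y : A) :
    ⁅∑ i ∈ s, f i, y⁆ = ∑ i ∈ s, ⁅f i, y⁆ := by
  simp [Ring.lie_def, Finset.sum_mul, Finset.mul_sum, Finset.sum_sub_distrib]

lemma lie_sum' {ι : Type*} (s : Finset ι) (x : A) (f : ι → A) :
    ⁅x, ∑ i ∈ s, f i⁆ = ∑ i ∈ s, ⁅x, f i⁆ := by
  simp [Ring.lie_def, Finset.sum_mul, Finset.mul_sum, Finset.sum_sub_distrib]

lemma lie_mul' (x u v : A) : ⁅x, u * v⁆ = ⁅x, u⁆ * v + u * ⁅x, v⁆ := by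
  simp only [Ring.lie_def]; noncomm_ring

lemma sum_rot {M : Type*} [AddCommMonoid M] {ι : Type*} [Fintype ι] (g : ι → ι → ι → M) :
    ∑ p, ∑ q, ∑ k, g p q k = ∑ k, ∑ q, ∑ p, g p q k :=
  calc ∑ p, ∑ q, ∑ k, g p q k
      = ∑ p, ∑ k, ∑ q, g p q k := Finset.sum_congr rfl fun _ _ => Finset.sum_comm
    _ = ∑ k, ∑ p, ∑ q, g p q k := Finset.sum_comm
    _ = ∑ k, ∑ q, ∑ p, g p q k := Finset.sum_congr rfl fun _ _ => Finset.sum_comm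

lemma collapse {m : ℕ} (M N : Matrix (Fin m) (Fin m) ℂ) (b : Fin m → Fin m → A)
    (h : ∀ k l p q, ⁅b k l, b p q⁆ =
      (if l = p then (2:ℂ) else 0) • b k q + (if k = q then (-2:ℂ) else 0) • b p l) :
    ⁅∑ k, ∑ l, M k l • b k l, ∑ p, ∑ q, N p q • b p q⁆ =
      (2:ℂ) • ∑ k, ∑ l, (M * N - N * M) k l • b k l := by
  simp only [sum_lie', lie_sum', smul_lie, lie_smul, h, smul_add, smul_smul,
    Finset.sum_add_distrib, mul_ite, mul_zero, ite_smul, zero_smul,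
    smul_ite, smul_zero, Finset.sum_ite_irrel, Finset.sum_const_zero,
    Finset.sum_ite_eq, Finset.sum_ite_eq', Finset.mem_univ, if_true,
    Finset.smul_sum, Matrix.sub_apply, Matrix.mul_apply, sub_smul, smul_sub,
    Finset.sum_sub_distrib, Finset.sum_smul]
  rw [sub_eq_add_neg]
  congr 1
  · rw [sum_rot fun p q k => (N p q * (M k p * 2)) • b k q]
    exact Finset.sum_congr rfl fun k _ => Finset.sum_congr rfl fun q _ =>
      Finset.sum_congr rfl fun p _ => by rw [mul_comm (N p q), mul_comm (M k p) 2, mul_assoc]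
  · simp only [← Finset.sum_neg_distrib, ← neg_smul]
    refine Finset.sum_congr rfl fun p _ => ?_
    rw [Finset.sum_comm]
    exact Finset.sum_congr rfl fun l _ => Finset.sum_congr rfl fun q _ => by
      congr 1; ring

lemma cross0 {m n : ℕ} (M : Matrix (Fin m) (Fin m) ℂ) (N : Matrix (Fin n) (Fin n) ℂ)
    (b : Fin m → Fin m → A) (f : Fin n → Fin n → A)
    (h : ∀ k l p q, ⁅b k l, f p q⁆ = 0) :
    ⁅∑ k, ∑ l, M k l • b k l, ∑ p, ∑ q, N p q • f p q⁆ = 0 := by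
  simp [sum_lie', lie_sum', smul_lie, lie_smul, h]

lemma boson_gen {ι : Type*} [DecidableEq ι] {B : ι → ℂ → A} (hB : IsParabosonFamily B)
    (k l p q : ι) :
    ⁅ringAnticomm (B k 1) (B l (-1)), ringAnticomm (B p 1) (B q (-1))⁆ =
      (if l = p then (2:ℂ) else 0) • ringAnticomm (B k 1) (B q (-1)) +
      (if k = q then (-2:ℂ) else 0) • ringAnticomm (B p 1) (B l (-1)) := by
  have e1 : ⁅ringAnticomm (B k 1) (B l (-1)), B p 1⁆ = (if l = p then (2:ℂ) else 0) • B k 1 := by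
    have := hB k l p 1 mem1 (-1) memm1 1 mem1
    rw [ringComm_eq_lie] at this
    rw [this]; norm_num [mul_ite]
  have e2 : ⁅ringAnticomm (B k 1) (B l (-1)), B q (-1)⁆ =
      (if k = q then (-2:ℂ) else 0) • B l (-1) := by
    have := hB k l q 1 mem1 (-1) memm1 (-1) memm1
    rw [ringComm_eq_lie] at this
    rw [this]; norm_num [mul_ite]
  conv_lhs => rw [show ringAnticomm (B p 1) (B q (-1)) =
      B p 1 * B q (-1) + B q (-1) * B p 1 from rfl]
  rw [lie_add, lie_mul', lie_mul', e1, e2]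
  simp only [ringAnticomm, smul_add, smul_mul_assoc, mul_smul_comm]
  abel

lemma fermion_gen {κ : Type*} [DecidableEq κ] {F : κ → ℂ → A} (hF : IsParafermionFamily F)
    (a b c d : κ) :
    ⁅ringComm (F a 1) (F b (-1)), ringComm (F c 1) (F d (-1))⁆ =
      (if b = c then (2:ℂ) else 0) • ringComm (F a 1) (F d (-1)) +
      (if a = d then (-2:ℂ) else 0) • ringComm (F c 1) (F b (-1)) := by
  have e1 : ⁅ringComm (F a 1) (F b (-1)), F c 1⁆ = (if b = c then (2:ℂ) else 0) • F a 1 := by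
    have := hF a b c 1 mem1 (-1) memm1 1 mem1
    rw [ringComm_eq_lie, ringComm_eq_lie] at this
    rw [ringComm_eq_lie, this]; norm_num [mul_ite]
  have e2 : ⁅ringComm (F a 1) (F b (-1)), F d (-1)⁆ =
      (if a = d then (-2:ℂ) else 0) • F b (-1) := by
    have := hF a b d 1 mem1 (-1) memm1 (-1) memm1
    rw [ringComm_eq_lie, ringComm_eq_lie] at this
    rw [ringComm_eq_lie, this]; norm_num [mul_ite]; split_ifs <;> simp
  conv_lhs => rw [show ringComm (F c 1) (F d (-1)) =
      F c 1 * F d (-1) - F d (-1) * F c 1 from rfl]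
  rw [lie_sub, lie_mul', lie_mul', e1, e2]
  simp only [ringComm, smul_sub, smul_mul_assoc, mul_smul_comm]
  abel

lemma bf_gen {ι κ : Type*} [DecidableEq ι] [DecidableEq κ] {B : ι → ℂ → A} {F : κ → ℂ → A}
    (hBF : RelParaboseMixed B F) (k l : ι) (c d : κ) :
    ⁅ringAnticomm (B k 1) (B l (-1)), ringComm (F c 1) (F d (-1))⁆ = 0 := by
  have c1 : ⁅ringAnticomm (B k 1) (B l (-1)), F c 1⁆ = 0 :=
    (hBF k l c c 1 mem1 (-1) memm1 1 mem1).1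
  have c2 : ⁅ringAnticomm (B k 1) (B l (-1)), F d (-1)⁆ = 0 :=
    (hBF k l d d 1 mem1 (-1) memm1 (-1) memm1).1
  conv_lhs => rw [show ringComm (F c 1) (F d (-1)) =
      F c 1 * F d (-1) - F d (-1) * F c 1 from rfl]
  rw [lie_sub, lie_mul', lie_mul', c1, c2]
  simp

end Aux

theorem mixed_paraparticle_realization_of_Lie_algebra
    {A : Type*} [Ring A] [Algebra ℂ A] {m n : ℕ}
    {L : Type*} [LieRing L] [LieAlgebra ℂ L]
    (ρ : L →ₗ⁅ℂ⁆ Matrix (Fin m) (Fin m) ℂ) (σ : L →ₗ⁅ℂ⁆ Matrix (Fin n) (Fin n) ℂ)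
    (B : Fin m → ℂ → A) (F : Fin n → ℂ → A)
    (hB : IsParabosonFamily B) (hF : IsParafermionFamily F)
    (hBF : RelParaboseMixed B F)
    (J : L →ₗ[ℂ] A)
    (hJ : ∀ X : L, J X =
      (1 / 2 : ℂ) • ∑ k, ∑ l, ρ X k l • ringAnticomm (B k 1) (B l (-1)) +
        (1 / 2 : ℂ) • ∑ α, ∑ β, σ X α β • ringComm (F α 1) (F β (-1))) :
    (∀ X Y : L, J ⁅X, Y⁆ = J X * J Y - J Y * J X) ∧
    ∃! φ : UniversalEnvelopingAlgebra ℂ L →ₐ[ℂ] A,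
      ∀ X : L, φ (UniversalEnvelopingAlgebra.ι ℂ X) = J X := by
  have part1 : ∀ X Y : L, J ⁅X, Y⁆ = J X * J Y - J Y * J X := by
    intro X Y
    rw [← Ring.lie_def, hJ X, hJ Y, hJ ⁅X, Y⁆]
    have hρ : ρ ⁅X, Y⁆ = ρ X * ρ Y - ρ Y * ρ X := by
      rw [LieHom.map_lie]; rfl
    have hσ : σ ⁅X, Y⁆ = σ X * σ Y - σ Y * σ X := by
      rw [LieHom.map_lie]; rfl
    have hbb := collapse (ρ X) (ρ Y) (fun k l => ringAnticomm (B k 1) (B l (-1)))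
      (boson_gen hB)
    have hff := collapse (σ X) (σ Y) (fun a b => ringComm (F a 1) (F b (-1)))
      (fermion_gen hF)
    have hbf := cross0 (ρ X) (σ Y) (fun k l => ringAnticomm (B k 1) (B l (-1)))
      (fun a b => ringComm (F a 1) (F b (-1))) (bf_gen hBF)
    have hfb : ⁅∑ a, ∑ b, σ X a b • ringComm (F a 1) (F b (-1)),
        ∑ k, ∑ l, ρ Y k l • ringAnticomm (B k 1) (B l (-1))⁆ = 0 := by
      have h0 := cross0 (ρ Y) (σ X) (fun k l => ringAnticomm (B k 1) (B l (-1)))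
        (fun a b => ringComm (F a 1) (F b (-1))) (bf_gen hBF)
      rw [← lie_skew, h0, neg_zero]
    rw [lie_add, add_lie, add_lie, smul_lie, smul_lie, smul_lie, smul_lie,
      lie_smul, lie_smul, lie_smul, lie_smul, hbb, hff, hbf, hfb, ← hρ, ← hσ]
    simp only [smul_zero, add_zero, zero_add, smul_smul]
    norm_num
  refine ⟨part1, ?_⟩
  let J' : L →ₗ⁅ℂ⁆ A :=
    { toLinearMap := J,
      map_lie' := fun {x y} => by
        change J ⁅x, y⁆ = ⁅J x, J y⁆
        rw [Ring.lie_def]; exact part1 x y }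
  refine ⟨UniversalEnvelopingAlgebra.lift ℂ J', fun X => ?_, fun g hg => ?_⟩
  · exact UniversalEnvelopingAlgebra.lift_ι_apply ℂ J' X
  · rw [← UniversalEnvelopingAlgebra.lift_unique]
    funext x
    exact hg x

end
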